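/- For every weighted graph (V,w) and every hierarchical clustering tree T on V, cost(T) = 2·W + Σ over internal nodes of T of mergecost(A,B), where at each internal node A and B denote the leaf sets of its two children and W denotes the total weight Σ over unordered pairs {i,j} of distinct vertices of w(i,j). -/

import Mathlib

open Finset

/-- A hierarchical clustering tree: a rooted binary tree with leaves labelled by vertices. -/
inductive HC (V : Type*) where
  | leaf : V → HC V
  | node : HC V → HC V → HC V

namespace HC

variable {V : Type*}

/-- The list of leaf labels of a tree, left to right. -/
def leafList : HC V → List V
  | .leaf v => [v]
  | .node l r => leafList l ++ leafList r

/-- The set of leaf labels of a tree. -/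
def leaves [DecidableEq V] (t : HC V) : Finset V :=
  t.leafList.toFinset

/-- `t.cluster i j` is the leaf set of the subtree of `t` rooted at the least common
ancestor of the leaves `i` and `j` (i.e. `leaves(T[i ∨ j])`). -/
def cluster [DecidableEq V] : HC V → V → V → Finset V
  | .leaf v, _, _ => {v}
  | .node l r, i, j =>
    if i ∈ l.leaves ∧ j ∈ l.leaves then l.cluster i j
    else if i ∈ r.leaves ∧ j ∈ r.leaves then r.cluster i j
    else (HC.node l r).leaves

/-- `t` is a hierarchical clustering tree on the whole vertex type `V`:
its leaves are in bijection with `V`. -/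
def IsTreeOn [Fintype V] [DecidableEq V] (t : HC V) : Prop :=
  t.leafList.Nodup ∧ t.leaves = Finset.univ

/-- Sum of `f A B` over all internal nodes of the tree, where `A`, `B` are the
leaf sets of the two children of the internal node. -/
def internalSum [DecidableEq V] (f : Finset V → Finset V → ℝ) : HC V → ℝ
  | .leaf _ => 0
  | .node l r => f l.leaves r.leaves + internalSum f l + internalSum f r

/-- The list of all subtrees of a tree. -/
def subtreesList : HC V → List (HC V)
  | .leaf v => [.leaf v]
  | .node l r => .node l r :: (subtreesList l ++ subtreesList r)

/-- Dasgupta's cost: sum over unordered pairs `{i,j}` of distinct vertices of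
`w i j * |leaves(T[i ∨ j])|`. -/
noncomputable def cost [Fintype V] [DecidableEq V] (w : V → V → ℝ) (t : HC V) : ℝ :=
  (1 / 2) * ∑ p ∈ Finset.univ.offDiag, w p.1 p.2 * ((t.cluster p.1 p.2).card : ℝ)

/-- Moseley–Wang revenue: sum over unordered pairs `{i,j}` of distinct vertices of
`w i j * |nonleaves(T[i ∨ j])|`. -/
noncomputable def rev [Fintype V] [DecidableEq V] (w : V → V → ℝ) (t : HC V) : ℝ :=
  (1 / 2) * ∑ p ∈ Finset.univ.offDiag,
    w p.1 p.2 * ((Finset.univ \ t.cluster p.1 p.2).card : ℝ)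

/-- Cohen-Addad et al.'s value: the same formula as cost, used for dissimilarity weights. -/
noncomputable def val [Fintype V] [DecidableEq V] (w : V → V → ℝ) (t : HC V) : ℝ :=
  cost w t

end HC

/-- The total weight `W`: the sum of `w i j` over unordered pairs of distinct vertices. -/
noncomputable def totalWeight {V : Type*} [Fintype V] [DecidableEq V] (w : V → V → ℝ) : ℝ :=
  (1 / 2) * ∑ p ∈ Finset.univ.offDiag, w p.1 p.2

/-- The merge cost of merging disjoint clusters `A` and `B`. -/
noncomputable def mergeCost {V : Type*} [Fintype V] [DecidableEq V] (w : V → V → ℝ) (A B : Finset V) : ℝ :=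
  (B.card : ℝ) * ∑ a ∈ A, ∑ c ∈ Finset.univ \ (A ∪ B), w a c
    + (A.card : ℝ) * ∑ b ∈ B, ∑ c ∈ Finset.univ \ (A ∪ B), w b c

/-- The merge revenue of merging disjoint clusters `A` and `B`. -/
noncomputable def mergeRev {V : Type*} [Fintype V] (w : V → V → ℝ) (A B : Finset V) : ℝ :=
  ((Fintype.card V : ℝ) - (A.card : ℝ) - (B.card : ℝ)) * ∑ a ∈ A, ∑ b ∈ B, w a b

/-- The average linkage between disjoint nonempty clusters `A` and `B`. -/
noncomputable def avgLinkage {V : Type*} (w : V → V → ℝ) (A B : Finset V) : ℝ :=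
  (1 / ((A.card : ℝ) * (B.card : ℝ))) * ∑ a ∈ A, ∑ b ∈ B, w a b

/-- A matching encoded as an involution `f : V → V`: the matched pairs are the pairs
`{v, f v}` with `f v ≠ v`; its weight is the sum of weights of matched pairs. -/
noncomputable def matchingWeight {V : Type*} [Fintype V] [DecidableEq V] (w : V → V → ℝ) (f : V → V) : ℝ :=
  (1 / 2) * ∑ v ∈ Finset.univ.filter (fun v => f v ≠ v), w v (f v)

/-- A perfect matching encoded as a fixed-point-free involution. -/
def IsPerfectMatching {V : Type*} (f : V → V) : Prop :=
  (∀ v, f (f v) = v) ∧ ∀ v, f v ≠ v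



section Aux
variable {V : Type*} [Fintype V] [DecidableEq V]

lemma HC.leaves_node' (l r : HC V) : (HC.node l r).leaves = l.leaves ∪ r.leaves := by
  simp [HC.leaves, HC.leafList]

lemma key_lemma (w : V → V → ℝ) (hsymm : ∀ i j, w i j = w j i) (t : HC V)
    (ht : t.leafList.Nodup) :
    ∑ p ∈ t.leaves.offDiag, w p.1 p.2 * ((t.cluster p.1 p.2).card : ℝ)
      = 2 * (∑ p ∈ t.leaves.offDiag, w p.1 p.2)
        + 2 * HC.internalSum (mergeCost w) t
        - 2 * ((t.leaves.card : ℝ) - 1) *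
            ∑ i ∈ t.leaves, ∑ c ∈ Finset.univ \ t.leaves, w i c := by
  induction t with
  | leaf v => simp [HC.leaves, HC.leafList, HC.internalSum]
  | node l r ihl ihr =>
    rw [HC.leafList, List.nodup_append] at ht
    obtain ⟨hln, hrn, hlr⟩ := ht
    have hAB : Disjoint l.leaves r.leaves := by
      simpa [HC.leaves] using List.disjoint_toFinset_iff_disjoint.mpr (show List.Disjoint l.leafList r.leafList by intro a ha hb; exact hlr a ha a hb rfl)
    have el := ihl hln
    have er := ihr hrn
    set A := l.leaves with hA
    set B := r.leaves with hB
    have hne : ∀ x ∈ A, x ∉ B := fun x hx => Finset.disjoint_left.mp hAB hx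
    have hne' : ∀ x ∈ B, x ∉ A := fun x hx => Finset.disjoint_right.mp hAB hx
    have hleaves : (HC.node l r).leaves = A ∪ B := HC.leaves_node' l r
    -- split of offDiag sums
    have d1 : Disjoint A.offDiag B.offDiag := by
      rw [Finset.disjoint_left]
      rintro ⟨x, y⟩ hx hy
      rw [Finset.mem_offDiag] at hx hy
      exact hne x hx.1 hy.1
    have d2 : Disjoint (A.offDiag ∪ B.offDiag) (A ×ˢ B) := by
      rw [Finset.disjoint_left]
      rintro ⟨x, y⟩ h hp
      rw [Finset.mem_product] at hp
      rw [Finset.mem_union, Finset.mem_offDiag, Finset.mem_offDiag] at h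
      rcases h with ⟨_, hy, _⟩ | ⟨hx, _, _⟩
      · exact hne y hy hp.2
      · exact hne' x hx hp.1
    have d3 : Disjoint (A.offDiag ∪ B.offDiag ∪ A ×ˢ B) (B ×ˢ A) := by
      rw [Finset.disjoint_left]
      rintro ⟨x, y⟩ h hp
      rw [Finset.mem_product] at hp
      rw [Finset.mem_union, Finset.mem_union, Finset.mem_offDiag, Finset.mem_offDiag,
        Finset.mem_product] at h
      rcases h with (⟨hx, _, _⟩ | ⟨_, hy, _⟩) | ⟨hx, _⟩
      · exact hne x hx hp.1
      · exact hne' y hy hp.2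
      · exact hne x hx hp.1
    have split : ∀ f : V × V → ℝ,
        ∑ p ∈ (A ∪ B).offDiag, f p
          = ∑ p ∈ A.offDiag, f p + ∑ p ∈ B.offDiag, f p
            + ∑ p ∈ A ×ˢ B, f p + ∑ p ∈ B ×ˢ A, f p := by
      intro f
      rw [Finset.offDiag_union hAB, Finset.sum_union d3, Finset.sum_union d2,
        Finset.sum_union d1]
    -- cluster values on pieces
    have c1 : ∀ p ∈ A.offDiag, (HC.node l r).cluster p.1 p.2 = l.cluster p.1 p.2 := by
      rintro ⟨i, j⟩ hp
      rw [Finset.mem_offDiag] at hp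
      show (if i ∈ l.leaves ∧ j ∈ l.leaves then _ else _) = _
      rw [if_pos ⟨hp.1, hp.2.1⟩]
    have c2 : ∀ p ∈ B.offDiag, (HC.node l r).cluster p.1 p.2 = r.cluster p.1 p.2 := by
      rintro ⟨i, j⟩ hp
      rw [Finset.mem_offDiag] at hp
      show (if i ∈ l.leaves ∧ j ∈ l.leaves then _ else _) = _
      rw [if_neg (fun h => hne' i hp.1 h.1), if_pos ⟨hp.1, hp.2.1⟩]
    have c3 : ∀ p ∈ A ×ˢ B, (HC.node l r).cluster p.1 p.2 = A ∪ B := by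
      rintro ⟨i, j⟩ hp
      rw [Finset.mem_product] at hp
      show (if i ∈ l.leaves ∧ j ∈ l.leaves then _ else _) = _
      rw [if_neg (fun h => hne' j hp.2 h.2), if_neg (fun h => hne i hp.1 h.1), hleaves]
    have c4 : ∀ p ∈ B ×ˢ A, (HC.node l r).cluster p.1 p.2 = A ∪ B := by
      rintro ⟨i, j⟩ hp
      rw [Finset.mem_product] at hp
      show (if i ∈ l.leaves ∧ j ∈ l.leaves then _ else _) = _
      rw [if_neg (fun h => hne' i hp.1 h.1), if_neg (fun h => hne j hp.2 h.2), hleaves]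
    -- swap lemma
    have swapBA : ∀ g : ℝ, ∑ p ∈ B ×ˢ A, w p.1 p.2 * g = ∑ p ∈ A ×ˢ B, w p.1 p.2 * g := by
      intro g
      rw [Finset.sum_product, Finset.sum_product, Finset.sum_comm]
      exact Finset.sum_congr rfl fun a _ => Finset.sum_congr rfl fun b _ => by rw [hsymm]
    have swapBA1 : ∑ p ∈ B ×ˢ A, w p.1 p.2 = ∑ p ∈ A ×ˢ B, w p.1 p.2 := by
      rw [Finset.sum_product, Finset.sum_product, Finset.sum_comm]
      exact Finset.sum_congr rfl fun a _ => Finset.sum_congr rfl fun b _ => hsymm _ _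
    -- complement decompositions
    have hcompA : Finset.univ \ A = B ∪ (Finset.univ \ (A ∪ B)) := by
      ext c
      simp only [Finset.mem_sdiff, Finset.mem_univ, true_and, Finset.mem_union]
      have := fun h : c ∈ B => hne' c h
      tauto
    have hcompB : Finset.univ \ B = A ∪ (Finset.univ \ (A ∪ B)) := by
      ext c
      simp only [Finset.mem_sdiff, Finset.mem_univ, true_and, Finset.mem_union]
      have := fun h : c ∈ A => hne c h
      tauto
    have dB : Disjoint B (Finset.univ \ (A ∪ B)) := by
      rw [Finset.disjoint_left]
      intro x hx h
      exact (Finset.mem_sdiff.mp h).2 (Finset.mem_union_right _ hx)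
    have dA : Disjoint A (Finset.univ \ (A ∪ B)) := by
      rw [Finset.disjoint_left]
      intro x hx h
      exact (Finset.mem_sdiff.mp h).2 (Finset.mem_union_left _ hx)
    have eA : ∑ i ∈ A, ∑ c ∈ Finset.univ \ A, w i c
        = ∑ i ∈ A, ∑ j ∈ B, w i j + ∑ i ∈ A, ∑ c ∈ Finset.univ \ (A ∪ B), w i c := by
      rw [← Finset.sum_add_distrib]
      exact Finset.sum_congr rfl fun i _ => by rw [hcompA, Finset.sum_union dB]
    have eB : ∑ i ∈ B, ∑ c ∈ Finset.univ \ B, w i c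
        = ∑ i ∈ A, ∑ j ∈ B, w i j + ∑ i ∈ B, ∑ c ∈ Finset.univ \ (A ∪ B), w i c := by
      have hsw : ∑ i ∈ A, ∑ j ∈ B, w i j = ∑ i ∈ B, ∑ a ∈ A, w i a := by
        rw [Finset.sum_comm]
        exact Finset.sum_congr rfl fun b _ => Finset.sum_congr rfl fun a _ => hsymm a b
      rw [hsw, ← Finset.sum_add_distrib]
      exact Finset.sum_congr rfl fun i _ => by rw [hcompB, Finset.sum_union dA]
    -- cross sums with product
    have prodAB : ∀ g : ℝ, ∑ p ∈ A ×ˢ B, w p.1 p.2 * g = (∑ i ∈ A, ∑ j ∈ B, w i j) * g := by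
      intro g
      rw [Finset.sum_product, Finset.sum_mul]
      exact Finset.sum_congr rfl fun i _ => by rw [Finset.sum_mul]
    have prodAB1 : ∑ p ∈ A ×ˢ B, w p.1 p.2 = ∑ i ∈ A, ∑ j ∈ B, w i j := by
      rw [Finset.sum_product]
    -- E sums over union
    have eU : ∑ i ∈ A ∪ B, ∑ c ∈ Finset.univ \ (A ∪ B), w i c
        = ∑ i ∈ A, ∑ c ∈ Finset.univ \ (A ∪ B), w i c
          + ∑ i ∈ B, ∑ c ∈ Finset.univ \ (A ∪ B), w i c := Finset.sum_union hAB
    have hcard : ((A ∪ B).card : ℝ) = (A.card : ℝ) + (B.card : ℝ) := by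
      rw [Finset.card_union_of_disjoint hAB]; push_cast; ring
    -- piecewise cluster sums
    have s1 : ∑ p ∈ A.offDiag, w p.1 p.2 * (((HC.node l r).cluster p.1 p.2).card : ℝ)
        = ∑ p ∈ A.offDiag, w p.1 p.2 * ((l.cluster p.1 p.2).card : ℝ) :=
      Finset.sum_congr rfl fun p hp => by rw [c1 p hp]
    have s2 : ∑ p ∈ B.offDiag, w p.1 p.2 * (((HC.node l r).cluster p.1 p.2).card : ℝ)
        = ∑ p ∈ B.offDiag, w p.1 p.2 * ((r.cluster p.1 p.2).card : ℝ) :=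
      Finset.sum_congr rfl fun p hp => by rw [c2 p hp]
    have s3 : ∑ p ∈ A ×ˢ B, w p.1 p.2 * (((HC.node l r).cluster p.1 p.2).card : ℝ)
        = ∑ p ∈ A ×ˢ B, w p.1 p.2 * (((A ∪ B).card : ℝ)) :=
      Finset.sum_congr rfl fun p hp => by rw [c3 p hp]
    have s4 : ∑ p ∈ B ×ˢ A, w p.1 p.2 * (((HC.node l r).cluster p.1 p.2).card : ℝ)
        = ∑ p ∈ B ×ˢ A, w p.1 p.2 * (((A ∪ B).card : ℝ)) :=
      Finset.sum_congr rfl fun p hp => by rw [c4 p hp]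
    rw [eA] at el
    rw [eB] at er
    -- assemble
    rw [hleaves, split, split, s1, s2, s3, s4, swapBA, prodAB, swapBA1, prodAB1, eU,
      hcard, el, er]
    show _ = _ + 2 * (mergeCost w A B + HC.internalSum (mergeCost w) l
        + HC.internalSum (mergeCost w) r) - _
    rw [mergeCost]
    push_cast
    ring
end Aux


/-- `cost(T) = 2·W + Σ over internal nodes of T of mergecost(A, B)`, where at each
internal node `A` and `B` are the leaf sets of its two children. -/
theorem stmt1 {V : Type*} [Fintype V] [DecidableEq V]
    (w : V → V → ℝ) (hsymm : ∀ i j, w i j = w j i) (hnonneg : ∀ i j, 0 ≤ w i j)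
    (t : HC V) (ht : t.IsTreeOn) :
    HC.cost w t = 2 * totalWeight w + HC.internalSum (mergeCost w) t := by
  obtain ⟨hnd, huniv⟩ := ht
  have h := key_lemma w hsymm t hnd
  rw [huniv] at h
  simp only [Finset.sdiff_self, Finset.sum_empty, Finset.sum_const_zero, mul_zero,
    sub_zero] at h
  rw [HC.cost, totalWeight, h]
  ring
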